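/- Let V ≥ 0 be measurable with Σ_{r(y)=x} V(y) = 1 for all x ∈ X, and let ν be a Perron–Frobenius measure for R_V. Then for every n ≥ 1 the operator E_n^V defined on L¹(X, ν) by E_n^V(f)(x) = Σ_{r^n(y)=r^n(x)} V^{(n)}(y) f(y) is a version of the conditional expectation of f with respect to the sub-sigma-algebra r^{-n}(𝔅): for every f ∈ L¹(X, ν), E_n^V(f) is r^{-n}(𝔅)-measurable and ∫ E_n^V(f) g dν = ∫ f g dν for all bounded r^{-n}(𝔅)-measurable g. -/

import Mathlib

open MeasureTheory Filter Topology ENNReal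

noncomputable section

/-- `r` is averaging w.r.t. `ν`: every function in `L¹(ν)` which is measurable with respect to
`𝔅_∞ = ⋂ₙ r⁻ⁿ(𝔅)` is `ν`-a.e. constant. -/
def Averaging {X : Type*} [MeasurableSpace X] (r : X → X)
    (ν : MeasureTheory.Measure X) : Prop :=
  ∀ g : X → ℝ,
    Measurable[⨅ n : ℕ, MeasurableSpace.comap (r^[n]) inferInstance] g →
    MeasureTheory.Integrable g ν → ∃ c : ℝ, g =ᵐ[ν] fun _ => c

/-- The operator `Eₙ^V f (x) = Σ_{rⁿ y = rⁿ x} V⁽ⁿ⁾(y) f(y)`,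
where `V⁽ⁿ⁾(y) = V(y) V(r y) ⋯ V(r^{n-1} y)`. -/
def EV {X : Type*} (r : X → X) (V : X → ℝ) (n : ℕ) (f : X → ℝ) (x : X) : ℝ :=
  ∑' y : (r^[n]) ⁻¹' {r^[n] x}, (∏ k ∈ Finset.range n, V (r^[k] y.1)) * f y.1

/-! ### Auxiliary lemmas -/

section Aux
open Set

lemma tsum_fin {X : Type*} {s : Set X} (hs : s.Finite) (F : X → ℝ) :
    ∑' y : s, F y = ∑ y ∈ hs.toFinset, F y := by
  rw [tsum_subtype]
  rw [tsum_eq_sum (s := hs.toFinset) (f := s.indicator F)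
    (fun b hb => indicator_of_notMem (by simpa using hb) F)]
  exact Finset.sum_congr rfl fun b hb => indicator_of_mem (by simpa using hb) F

lemma iter_fib_fin {X : Type*} {r : X → X} (hfin : ∀ x, (r ⁻¹' {x}).Finite) (n : ℕ) :
    ∀ z, ((r^[n]) ⁻¹' {z}).Finite := by
  induction n with
  | zero => intro z; simp [Function.iterate_zero]
  | succ n ih =>
    intro z
    have h1 : (r^[n+1]) ⁻¹' {z} = r ⁻¹' ((r^[n]) ⁻¹' {z}) := by
      ext y; simp [Function.iterate_succ_apply, Set.mem_preimage]
    have h2 : r ⁻¹' ((r^[n]) ⁻¹' {z}) = ⋃ w ∈ (r^[n]) ⁻¹' {z}, r ⁻¹' {w} := by ext y; simp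
    rw [h1, h2]
    exact Set.Finite.biUnion (ih z) (fun w _ => hfin w)

lemma iter_surj {X : Type*} {r : X → X} (hne : ∀ x, (r ⁻¹' {x}).Nonempty) (n : ℕ) :
    Function.Surjective (r^[n]) := by
  induction n with
  | zero => simpa using Function.surjective_id
  | succ n ih =>
    intro z
    obtain ⟨w, hw⟩ := ih z
    obtain ⟨y, hy⟩ := hne w
    refine ⟨y, ?_⟩
    simp only [Function.iterate_succ_apply]
    rw [Set.mem_preimage, Set.mem_singleton_iff] at hy
    rw [hy]; exact hw

lemma S_succ {X : Type*} [DecidableEq X] (r : X → X) (V : X → ℝ)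
    (hfin : ∀ x, (r ⁻¹' {x}).Finite) (n : ℕ) (h : X → ℝ) (z : X) :
    ∑' y : (r^[n+1]) ⁻¹' {z}, (∏ k ∈ Finset.range (n+1), V (r^[k] y.1)) * h y.1
      = ∑' w : (r^[n]) ⁻¹' {z}, (∏ k ∈ Finset.range n, V (r^[k] w.1)) *
          (∑' u : r ⁻¹' {w.1}, V u.1 * h u.1) := by
  have hA := iter_fib_fin hfin (n+1) z
  have hB := iter_fib_fin hfin n z
  rw [tsum_fin hA (fun y => (∏ k ∈ Finset.range (n+1), V (r^[k] y)) * h y),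
      tsum_fin hB (fun w => (∏ k ∈ Finset.range n, V (r^[k] w)) *
        (∑' u : r ⁻¹' {w}, V u.1 * h u.1))]
  have hsplit : hA.toFinset = hB.toFinset.biUnion (fun w => (hfin w).toFinset) := by
    ext y
    simp only [Set.Finite.mem_toFinset, Finset.mem_biUnion, Set.mem_preimage,
      Set.mem_singleton_iff, Function.iterate_succ_apply]
    constructor
    · intro hy; exact ⟨r y, hy, rfl⟩
    · rintro ⟨w, hw, rfl⟩; exact hw
  rw [hsplit, Finset.sum_biUnion]
  · refine Finset.sum_congr rfl fun w hw => ?_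
    rw [tsum_fin (hfin w) (fun u => V u * h u), Finset.mul_sum]
    refine Finset.sum_congr rfl fun u hu => ?_
    have hru : r u = w := by simpa using hu
    have hprod : ∏ k ∈ Finset.range (n+1), V (r^[k] u) =
        (∏ k ∈ Finset.range n, V (r^[k] w)) * V u := by
      rw [Finset.prod_range_succ']
      simp only [Function.iterate_zero, id_eq]
      congr 1
      exact Finset.prod_congr rfl fun k _ => by
        rw [Function.iterate_succ_apply, hru]
    rw [hprod]; ring
  · intro w hw w' hw' hne
    simp only [Finset.disjoint_left, Set.Finite.mem_toFinset, Set.mem_preimage,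
      Set.mem_singleton_iff]
    intro u hu hu'
    exact hne (by rw [← hu, ← hu'])

lemma analytic_lt {X : Type*} [MetricSpace X] [CompactSpace X] [MeasurableSpace X] [BorelSpace X]
    [DecidableEq X]
    {q : X → X} (hq : Measurable q) (hfq : ∀ z, (q ⁻¹' {z}).Finite)
    {W : X → ℝ} (hWm : Measurable W) (hW0 : ∀ y, 0 ≤ W y)
    (g : X → ℝ) (hgm : Measurable g) (hg0 : ∀ x, 0 ≤ g x) (a : ℝ) :
    AnalyticSet {z : X | a < ∑' y : q ⁻¹' {z}, W y.1 * g y.1} := by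
  have key : {z : X | a < ∑' y : q ⁻¹' {z}, W y.1 * g y.1} =
      ⋃ k : ℕ, (fun p : X × (Fin k → X) => p.1) ''
        {p : X × (Fin k → X) | Function.Injective p.2 ∧ (∀ i, q (p.2 i) = p.1) ∧
          a < ∑ i, W (p.2 i) * g (p.2 i)} := by
    ext z
    simp only [mem_setOf_eq, mem_iUnion, mem_image, Prod.exists]
    constructor
    · intro hz
      haveI := (hfq z).fintype
      refine ⟨Fintype.card (q ⁻¹' {z} : Set X), z, fun i => ((Fintype.equivFin _).symm i).1,
        ⟨?_, ?_, ?_⟩, rfl⟩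
      · intro i j hij
        exact (Fintype.equivFin _).symm.injective (Subtype.ext hij)
      · intro i; exact ((Fintype.equivFin (q ⁻¹' {z} : Set X)).symm i).2
      · rw [tsum_fintype] at hz
        have he := Equiv.sum_comp (Fintype.equivFin (q ⁻¹' {z} : Set X)).symm
          (fun y : (q ⁻¹' {z} : Set X) => W y.1 * g y.1)
        rw [← he] at hz
        exact hz
    · rintro ⟨k, z', ys, ⟨hinj, hmem, hsum⟩, rfl⟩
      rw [tsum_fin (hfq z') (fun y => W y * g y)]
      refine lt_of_lt_of_le hsum ?_
      have himg : (Finset.univ.image ys) ⊆ (hfq z').toFinset := by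
        intro y hy
        simp only [Finset.mem_image] at hy
        obtain ⟨i, _, rfl⟩ := hy
        simp [Set.Finite.mem_toFinset, hmem i]
      calc ∑ i, W (ys i) * g (ys i) = ∑ y ∈ Finset.univ.image ys, W y * g y := by
            rw [Finset.sum_image (fun i _ j _ h => hinj h)]
        _ ≤ ∑ y ∈ (hfq z').toFinset, W y * g y :=
            Finset.sum_le_sum_of_subset_of_nonneg himg
              (fun y _ _ => mul_nonneg (hW0 y) (hg0 y))
  rw [key]
  refine AnalyticSet.iUnion fun k => ?_
  refine MeasurableSet.analyticSet_image ?_ measurable_fst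
  have h1 : MeasurableSet {p : X × (Fin k → X) | Function.Injective p.2} := by
    have he : {p : X × (Fin k → X) | Function.Injective p.2} =
        ⋂ i, ⋂ j, ⋂ (_ : i ≠ j),
          ((fun p : X × (Fin k → X) => (p.2 i, p.2 j)) ⁻¹' (Set.diagonal X))ᶜ := by
      ext p
      simp only [mem_setOf_eq, mem_iInter, mem_compl_iff, mem_preimage, Set.mem_diagonal_iff,
        Function.Injective]
      constructor
      · intro h i j hij hpij; exact hij (h hpij)
      · intro h i j hij
        by_contra hne
        exact h i j hne hij
    rw [he]
    refine MeasurableSet.iInter fun i => MeasurableSet.iInter fun j =>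
      MeasurableSet.iInter fun _ => MeasurableSet.compl ?_
    exact (((measurable_pi_apply i).comp measurable_snd).prodMk
      ((measurable_pi_apply j).comp measurable_snd)) isClosed_diagonal.measurableSet
  have h2 : MeasurableSet {p : X × (Fin k → X) | ∀ i, q (p.2 i) = p.1} := by
    have he : {p : X × (Fin k → X) | ∀ i, q (p.2 i) = p.1} =
        ⋂ i, ((fun p : X × (Fin k → X) => (q (p.2 i), p.1)) ⁻¹' (Set.diagonal X)) := by
      ext p; simp [Set.mem_diagonal_iff]
    rw [he]
    refine MeasurableSet.iInter fun i => ?_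
    exact ((hq.comp ((measurable_pi_apply i).comp measurable_snd)).prodMk
      measurable_fst) isClosed_diagonal.measurableSet
  have h3 : MeasurableSet {p : X × (Fin k → X) | a < ∑ i, W (p.2 i) * g (p.2 i)} := by
    have hm : Measurable (fun p : X × (Fin k → X) => ∑ i, W (p.2 i) * g (p.2 i)) :=
      Finset.measurable_sum _ fun i _ =>
        ((hWm.comp ((measurable_pi_apply i).comp measurable_snd)).mul
          (hgm.comp ((measurable_pi_apply i).comp measurable_snd)))
    exact hm measurableSet_Ioi
  have he : {p : X × (Fin k → X) | Function.Injective p.2 ∧ (∀ i, q (p.2 i) = p.1) ∧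
      a < ∑ i, W (p.2 i) * g (p.2 i)} =
      {p | Function.Injective p.2} ∩ ({p | ∀ i, q (p.2 i) = p.1} ∩
        {p | a < ∑ i, W (p.2 i) * g (p.2 i)}) := by ext p; simp [mem_setOf_eq, and_assoc]
  rw [he]
  exact h1.inter (h2.inter h3)

section Core
variable {X : Type*} [MetricSpace X] [CompactSpace X] [MeasurableSpace X] [BorelSpace X]
    [DecidableEq X]
    {q : X → X} (hq : Measurable q) (hfq : ∀ z, (q ⁻¹' {z}).Finite)
    {W : X → ℝ} (hWm : Measurable W) (hW0 : ∀ y, 0 ≤ W y)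

include hq hfq hWm hW0 in
lemma analytic_ge (g : X → ℝ) (hgm : Measurable g) (hg0 : ∀ x, 0 ≤ g x) (a : ℝ) :
    AnalyticSet {z : X | a ≤ ∑' y : q ⁻¹' {z}, W y.1 * g y.1} := by
  have key : {z : X | a ≤ ∑' y : q ⁻¹' {z}, W y.1 * g y.1} =
      ⋂ k : ℕ, {z : X | a - 1/(k+1) < ∑' y : q ⁻¹' {z}, W y.1 * g y.1} := by
    ext z
    simp only [mem_setOf_eq, mem_iInter]
    constructor
    · intro hz k
      refine lt_of_lt_of_le ?_ hz
      have : (0:ℝ) < 1/(k+1) := by positivity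
      linarith
    · intro hz
      by_contra hlt
      push_neg at hlt
      obtain ⟨k, hk⟩ := exists_nat_one_div_lt (sub_pos.mpr hlt)
      have := hz k
      linarith
  rw [key]
  exact AnalyticSet.iInter fun k => analytic_lt hq hfq hWm hW0 g hgm hg0 _

include hfq in
lemma SW_linear_sub (hWsum : ∀ z, (∑' y : q ⁻¹' {z}, W y.1) = 1)
    (g : X → ℝ) (M : ℝ) (z : X) :
    ∑' y : q ⁻¹' {z}, W y.1 * ((fun x => M - g x) y.1)
      = M - ∑' y : q ⁻¹' {z}, W y.1 * g y.1 := by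
  have h1 := hWsum z
  rw [tsum_fin (hfq z) W] at h1
  rw [tsum_fin (hfq z) (fun y => W y * (M - g y)), tsum_fin (hfq z) (fun y => W y * g y)]
  have hr : ∀ y, W y * (M - g y) = W y * M - W y * g y := fun y => by ring
  simp_rw [hr, Finset.sum_sub_distrib, ← Finset.sum_mul, h1]
  ring

include hq hfq hWm hW0 in
lemma measurable_SW_bdd (hWsum : ∀ z, (∑' y : q ⁻¹' {z}, W y.1) = 1)
    (g : X → ℝ) (hgm : Measurable g) (hg0 : ∀ x, 0 ≤ g x) (M : ℝ) (hgM : ∀ x, g x ≤ M) :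
    Measurable (fun z => ∑' y : q ⁻¹' {z}, W y.1 * g y.1) := by
  apply measurable_of_Ioi
  intro a
  have hA : AnalyticSet {z : X | a < ∑' y : q ⁻¹' {z}, W y.1 * g y.1} :=
    analytic_lt hq hfq hWm hW0 g hgm hg0 a
  have hAc : AnalyticSet {z : X | a < ∑' y : q ⁻¹' {z}, W y.1 * g y.1}ᶜ := by
    have hcompl : {z : X | a < ∑' y : q ⁻¹' {z}, W y.1 * g y.1}ᶜ =
        {z : X | M - a ≤ ∑' y : q ⁻¹' {z}, W y.1 * ((fun x => M - g x) y.1)} := by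
      ext z
      simp only [mem_compl_iff, mem_setOf_eq, not_lt, SW_linear_sub hfq hWsum g M z]
      constructor <;> intro h <;> linarith
    rw [hcompl]
    exact analytic_ge hq hfq hWm hW0 (fun x => M - g x) (measurable_const.sub hgm)
      (fun x => sub_nonneg.mpr (hgM x)) (M - a)
  obtain ⟨u, hsu, hdisj, humeas⟩ :=
    hA.measurablySeparable hAc (disjoint_compl_right)
  have hAu : {z : X | a < ∑' y : q ⁻¹' {z}, W y.1 * g y.1} = u := by
    apply Subset.antisymm hsu
    intro z hz
    by_contra hzA
    exact (Set.disjoint_left.mp hdisj hzA) hz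
  show MeasurableSet ((fun z => ∑' y : q ⁻¹' {z}, W y.1 * g y.1) ⁻¹' (Set.Ioi a))
  have heq : ((fun z => ∑' y : q ⁻¹' {z}, W y.1 * g y.1) ⁻¹' (Set.Ioi a)) =
      {z : X | a < ∑' y : q ⁻¹' {z}, W y.1 * g y.1} := rfl
  rw [heq, hAu]
  exact humeas

include hq hfq hWm hW0 in
lemma measurable_SW (hWsum : ∀ z, (∑' y : q ⁻¹' {z}, W y.1) = 1)
    (f : X → ℝ) (hfm : Measurable f) :
    Measurable (fun z => ∑' y : q ⁻¹' {z}, W y.1 * f y.1) := by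
  have main : ∀ g : X → ℝ, Measurable g → (∀ x, 0 ≤ g x) →
      Measurable (fun z => ∑' y : q ⁻¹' {z}, W y.1 * g y.1) := by
    intro g hgm hg0
    have htrunc : ∀ m : ℕ, Measurable (fun z => ∑' y : q ⁻¹' {z}, W y.1 * min (g y.1) m) :=
      fun m => measurable_SW_bdd hq hfq hWm hW0 hWsum _ (hgm.min measurable_const)
        (fun x => le_min (hg0 x) (Nat.cast_nonneg m)) m
        (fun x => min_le_right _ _)
    apply measurable_of_tendsto_metrizable' atTop htrunc
    rw [tendsto_pi_nhds]
    intro z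
    obtain ⟨N, hN⟩ := ((hfq z).toFinset.image g).exists_le
    obtain ⟨m₀, hm₀⟩ := exists_nat_ge N
    apply tendsto_atTop_of_eventually_const (i₀ := m₀)
    intro m hm
    rw [tsum_fin (hfq z) (fun y => W y * min (g y) m), tsum_fin (hfq z) (fun y => W y * g y)]
    refine Finset.sum_congr rfl fun y hy => ?_
    have hle : g y ≤ m := by
      refine le_trans (hN (g y) (Finset.mem_image_of_mem g hy)) (le_trans hm₀ ?_)
      exact_mod_cast Nat.cast_le.mpr hm
    rw [min_eq_left hle]
  have h1 := main (fun x => max (f x) 0) (hfm.max measurable_const) (fun x => le_max_right _ _)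
  have h2 := main (fun x => max (-f x) 0) (hfm.neg.max measurable_const)
    (fun x => le_max_right _ _)
  have heq : (fun z => ∑' y : q ⁻¹' {z}, W y.1 * f y.1) =
      fun z => (∑' y : q ⁻¹' {z}, W y.1 * max (f y.1) 0)
        - (∑' y : q ⁻¹' {z}, W y.1 * max (-f y.1) 0) := by
    funext z
    rw [tsum_fin (hfq z) (fun y => W y * f y), tsum_fin (hfq z) (fun y => W y * max (f y) 0),
      tsum_fin (hfq z) (fun y => W y * max (-f y) 0), ← Finset.sum_sub_distrib]
    refine Finset.sum_congr rfl fun y _ => ?_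
    rcases le_total (f y) 0 with h | h
    · rw [max_eq_right h, max_eq_left (by linarith)]; ring
    · rw [max_eq_left h, max_eq_right (by linarith)]; ring
  rw [heq]
  exact h1.sub h2
end Core

section SumOne
variable {X : Type*} [DecidableEq X] {r : X → X} (hfin : ∀ x, (r ⁻¹' {x}).Finite)

include hfin in
lemma S_zero (V : X → ℝ) (h : X → ℝ) (z : X) :
    ∑' y : (r^[0]) ⁻¹' {z}, (∏ k ∈ Finset.range 0, V (r^[k] y.1)) * h y.1 = h z := by
  rw [tsum_fin (iter_fib_fin hfin 0 z) (fun y => (∏ k ∈ Finset.range 0, V (r^[k] y)) * h y)]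
  have hz : (iter_fib_fin hfin 0 z).toFinset = {z} := by
    ext y; simp [Set.Finite.mem_toFinset]
  rw [hz, Finset.sum_singleton]
  simp

include hfin in
lemma S_one (V : X → ℝ) (hVsum : ∀ x : X, ∑' y : r ⁻¹' {x}, V y.1 = 1) (n : ℕ) (z : X) :
    ∑' y : (r^[n]) ⁻¹' {z}, (∏ k ∈ Finset.range n, V (r^[k] y.1)) * (1:ℝ) = 1 := by
  induction n generalizing z with
  | zero => exact S_zero hfin V (fun _ => 1) z
  | succ n ih =>
    rw [S_succ r V hfin n (fun _ => (1:ℝ)) z]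
    have hcg : ∀ w : ((r^[n]) ⁻¹' {z} : Set X),
        (∏ k ∈ Finset.range n, V (r^[k] w.1)) * (∑' u : r ⁻¹' {w.1}, V u.1 * (1:ℝ))
          = (∏ k ∈ Finset.range n, V (r^[k] w.1)) * (1:ℝ) := by
      intro w
      congr 1
      simp_rw [mul_one]
      exact hVsum w.1
    rw [tsum_congr hcg]
    exact ih z

include hfin in
lemma W_sum_one (V : X → ℝ) (hVsum : ∀ x : X, ∑' y : r ⁻¹' {x}, V y.1 = 1) (n : ℕ) (z : X) :
    ∑' y : (r^[n]) ⁻¹' {z}, (∏ k ∈ Finset.range n, V (r^[k] y.1)) = 1 := by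
  have := S_one hfin V hVsum n z
  simpa [mul_one] using this
end SumOne

section Integrals
variable {X : Type*} [MeasurableSpace X]
  [DecidableEq X] {r : X → X} (hfin : ∀ x, (r ⁻¹' {x}).Finite)
  (V : X → ℝ) (ν : Measure X)
  (hPF : ∀ f : X → ℝ, Integrable f ν →
      Integrable (fun x => ∑' y : r ⁻¹' {x}, V y.1 * f y.1) ν ∧
      ∫ x, (∑' y : r ⁻¹' {x}, V y.1 * f y.1) ∂ν = ∫ x, f x ∂ν)

include hfin hPF in
lemma S_integral (n : ℕ) : ∀ h : X → ℝ, Integrable h ν →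
    Integrable (fun z => ∑' y : (r^[n]) ⁻¹' {z},
        (∏ k ∈ Finset.range n, V (r^[k] y.1)) * h y.1) ν ∧
    ∫ z, (∑' y : (r^[n]) ⁻¹' {z}, (∏ k ∈ Finset.range n, V (r^[k] y.1)) * h y.1) ∂ν
      = ∫ x, h x ∂ν := by
  induction n with
  | zero =>
    intro h hh
    have he : (fun z => ∑' y : (r^[0]) ⁻¹' {z},
        (∏ k ∈ Finset.range 0, V (r^[k] y.1)) * h y.1) = h :=
      funext fun z => S_zero hfin V h z
    rw [he]
    exact ⟨hh, rfl⟩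
  | succ n ih =>
    intro h hh
    obtain ⟨hint, heq⟩ := hPF h hh
    have he : (fun z => ∑' y : (r^[n+1]) ⁻¹' {z},
        (∏ k ∈ Finset.range (n+1), V (r^[k] y.1)) * h y.1)
        = (fun z => ∑' w : (r^[n]) ⁻¹' {z}, (∏ k ∈ Finset.range n, V (r^[k] w.1)) *
            ((fun x => ∑' u : r ⁻¹' {x}, V u.1 * h u.1) w.1)) :=
      funext fun z => S_succ r V hfin n h z
    rw [he]
    obtain ⟨H1, H2⟩ := ih (fun x => ∑' u : r ⁻¹' {x}, V u.1 * h u.1) hint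
    exact ⟨H1, H2.trans heq⟩
end Integrals

section Inv
variable {X : Type*} [MeasurableSpace X]
  {r : X → X} (hr : Measurable r)
  {V : X → ℝ} (hVsum : ∀ x : X, ∑' y : r ⁻¹' {x}, V y.1 = 1)
  {ν : Measure X} [IsProbabilityMeasure ν]
  (hPF : ∀ f : X → ℝ, Integrable f ν →
      Integrable (fun x => ∑' y : r ⁻¹' {x}, V y.1 * f y.1) ν ∧
      ∫ x, (∑' y : r ⁻¹' {x}, V y.1 * f y.1) ∂ν = ∫ x, f x ∂ν)

include hr hVsum hPF in
lemma nu_invariant : MeasurePreserving r ν ν := by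
  refine ⟨hr, ?_⟩
  ext A hA
  rw [Measure.map_apply hr hA]
  set h : X → ℝ := A.indicator (fun _ => 1) with hh
  have hcomp : (fun x => h (r x)) = (r ⁻¹' A).indicator (fun _ => (1:ℝ)) := by
    funext x
    by_cases hx : r x ∈ A
    · simp [hh, hx, Set.indicator_of_mem, Set.mem_preimage.mpr hx]
    · simp [hh, hx, Set.indicator_of_notMem, hx]
  have hint : Integrable (fun x => h (r x)) ν := by
    rw [hcomp]
    exact (integrable_const (1:ℝ)).indicator (hr hA)
  obtain ⟨_, heq⟩ := hPF (fun x => h (r x)) hint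
  have hT : (fun x => ∑' y : r ⁻¹' {x}, V y.1 * (fun x => h (r x)) y.1) = h := by
    funext x
    have hcg : ∀ y : (r ⁻¹' {x} : Set X), V y.1 * h (r y.1) = V y.1 * h x := by
      rintro ⟨y, hy⟩
      simp only [Set.mem_preimage, Set.mem_singleton_iff] at hy
      rw [hy]
    rw [tsum_congr hcg, tsum_mul_right, hVsum x, one_mul]
  rw [hT] at heq
  have h1 : ∫ x, h x ∂ν = (ν A).toReal := by
    simp [hh, integral_indicator_const, hA, measureReal_def]
  have h2 : ∫ x, h (r x) ∂ν = (ν (r ⁻¹' A)).toReal := by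
    rw [hcomp]
    simp [integral_indicator_const, hr hA, measureReal_def]
  rw [h1, h2] at heq
  exact (ENNReal.toReal_eq_toReal_iff' (measure_ne_top ν _) (measure_ne_top ν _)).mp heq.symm
end Inv

lemma factor_g {X : Type*} [MeasurableSpace X] {q : X → X} (hqsurj : Function.Surjective q)
    {g : X → ℝ} (hg : Measurable[MeasurableSpace.comap q inferInstance] g) :
    ∃ G : X → ℝ, Measurable G ∧ (∀ x, G (q x) = g x) ∧
      (∀ c : ℝ, (∀ x, |g x| ≤ c) → ∀ z, |G z| ≤ c) := by
  have hconst : ∀ y y', q y = q y' → g y = g y' := by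
    intro y y' hqy
    obtain ⟨C, hC, hCeq⟩ := hg (measurableSet_singleton (g y'))
    have hy' : y' ∈ q ⁻¹' C := by
      rw [hCeq]; exact rfl
    have hy : y ∈ q ⁻¹' C := by
      simp only [Set.mem_preimage] at hy' ⊢
      rw [hqy]; exact hy'
    rw [hCeq] at hy
    exact hy
  choose s hs using hqsurj
  refine ⟨g ∘ s, ?_, ?_, ?_⟩
  · intro B hB
    obtain ⟨C, hC, hCeq⟩ := hg hB
    have hGB : (g ∘ s) ⁻¹' B = C := by
      ext z
      have h1 : s z ∈ g ⁻¹' B ↔ s z ∈ q ⁻¹' C := by rw [hCeq]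
      simp only [Set.mem_preimage] at h1
      simp only [Set.mem_preimage, Function.comp_apply]
      rw [h1, hs z]
    rw [hGB]; exact hC
  · intro x
    exact hconst (s (q x)) x (hs (q x))
  · intro c hc z
    exact hc (s z)

end Aux

theorem statement15
    {X : Type*} [MetricSpace X] [CompactSpace X] [MeasurableSpace X] [BorelSpace X]
    (r : X → X) (hr : Measurable r)
    (hfin : ∀ x : X, (r ⁻¹' {x}).Finite) (hne : ∀ x : X, (r ⁻¹' {x}).Nonempty)
    (V : X → ℝ) (hVm : Measurable V) (hV0 : ∀ x, 0 ≤ V x)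
    (hVsum : ∀ x : X, ∑' y : r ⁻¹' {x}, V y.1 = 1)
    (ν : Measure X) [IsProbabilityMeasure ν]
    (hPF : ∀ f : X → ℝ, Integrable f ν →
      Integrable (fun x => ∑' y : r ⁻¹' {x}, V y.1 * f y.1) ν ∧
      ∫ x, (∑' y : r ⁻¹' {x}, V y.1 * f y.1) ∂ν = ∫ x, f x ∂ν)
    (n : ℕ) (hn : 1 ≤ n) (f : X → ℝ) (hfm : Measurable f) (hf : Integrable f ν) :
    Measurable[MeasurableSpace.comap (r^[n]) inferInstance] (EV r V n f) ∧
    ∀ g : X → ℝ, Measurable[MeasurableSpace.comap (r^[n]) inferInstance] g →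
      (∃ M : ℝ, ∀ x, |g x| ≤ M) →
      ∫ x, EV r V n f x * g x ∂ν = ∫ x, f x * g x ∂ν := by
  letI : DecidableEq X := Classical.decEq X
  have hq : Measurable (r^[n]) := hr.iterate n
  have hfq : ∀ z, ((r^[n]) ⁻¹' {z}).Finite := iter_fib_fin hfin n
  have hqs : Function.Surjective (r^[n]) := iter_surj hne n
  have hWm : Measurable (fun y => ∏ k ∈ Finset.range n, V (r^[k] y)) :=
    Finset.measurable_prod _ (fun k _ => hVm.comp (hr.iterate k))
  have hW0 : ∀ y, 0 ≤ ∏ k ∈ Finset.range n, V (r^[k] y) :=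
    fun y => Finset.prod_nonneg fun k _ => hV0 _
  have hWsum : ∀ z, (∑' y : (r^[n]) ⁻¹' {z},
      (fun y => ∏ k ∈ Finset.range n, V (r^[k] y)) y.1) = 1 :=
    fun z => W_sum_one hfin V hVsum n z
  -- measurability of the fiber-sum function
  have hSm : ∀ h : X → ℝ, Measurable h → Measurable (fun z => ∑' y : (r^[n]) ⁻¹' {z},
      (∏ k ∈ Finset.range n, V (r^[k] y.1)) * h y.1) := by
    intro h hm
    exact measurable_SW hq hfq hWm hW0 hWsum h hm
  have hSfm := hSm f hfm
  constructor
  · -- comap measurability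
    have hEV : EV r V n f = (fun z => ∑' y : (r^[n]) ⁻¹' {z},
        (∏ k ∈ Finset.range n, V (r^[k] y.1)) * f y.1) ∘ (r^[n]) := rfl
    rw [hEV]
    have hcomap : Measurable[MeasurableSpace.comap (r^[n]) inferInstance] (r^[n]) :=
      measurable_iff_comap_le.mpr le_rfl
    exact hSfm.comp hcomap
  · intro g hg hgbd
    obtain ⟨M, hM⟩ := hgbd
    obtain ⟨G, hGm, hGq, hGbd⟩ := factor_g hqs hg
    have hGb : ∀ z, |G z| ≤ M := hGbd M hM
    have hpres : MeasurePreserving (r^[n]) ν ν := (nu_invariant hr hVsum hPF).iterate n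
    have hgm' : Measurable g := by
      have hge : g = fun x => G (r^[n] x) := funext fun x => (hGq x).symm
      rw [hge]; exact hGm.comp hq
    have hfg : Integrable (fun x => f x * g x) ν := by
      have hI : Integrable (fun x => g x * f x) ν :=
        Integrable.bdd_mul hf hgm'.aestronglyMeasurable
          (c := M) (Filter.Eventually.of_forall fun x => by simpa [Real.norm_eq_abs] using hM x)
      have hce : (fun x => f x * g x) = (fun x => g x * f x) :=
        funext fun x => mul_comm _ _
      rw [hce]; exact hI
    -- abbreviation
    set S : X → ℝ := fun z => ∑' y : (r^[n]) ⁻¹' {z},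
        (∏ k ∈ Finset.range n, V (r^[k] y.1)) * f y.1 with hS
    have step1 : (fun x => EV r V n f x * g x) = fun x => (S (r^[n] x)) * (G (r^[n] x)) := by
      funext x
      have h1 : EV r V n f x = S (r^[n] x) := rfl
      rw [h1, hGq x]
    have step2 : ∫ x, (S (r^[n] x)) * (G (r^[n] x)) ∂ν = ∫ w, S w * G w ∂ν := by
      have hmeas : AEStronglyMeasurable (fun w => S w * G w) (Measure.map (r^[n]) ν) :=
        (hSfm.mul hGm).aestronglyMeasurable
      have := integral_map hq.aemeasurable hmeas
      rw [hpres.map_eq] at this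
      exact this.symm
    have step3 : ∫ w, S w * G w ∂ν = ∫ z, (∑' y : (r^[n]) ⁻¹' {z},
        (∏ k ∈ Finset.range n, V (r^[k] y.1)) * ((fun x => f x * g x) y.1)) ∂ν := by
      refine integral_congr_ae (Filter.EventuallyEq.of_eq (funext fun z => ?_))
      have hcg : ∀ y : ((r^[n]) ⁻¹' {z} : Set X),
          (∏ k ∈ Finset.range n, V (r^[k] y.1)) * (f y.1 * g y.1)
            = ((∏ k ∈ Finset.range n, V (r^[k] y.1)) * f y.1) * G z := by
        rintro ⟨y, hy⟩
        simp only [Set.mem_preimage, Set.mem_singleton_iff] at hy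
        have : g y = G z := by rw [← hy, hGq y]
        rw [this]; ring
      have e1 : S z * G z = ∑' y : ((r^[n]) ⁻¹' {z} : Set X),
          ((∏ k ∈ Finset.range n, V (r^[k] y.1)) * f y.1) * G z := tsum_mul_right.symm
      rw [e1]
      exact tsum_congr fun y => (hcg y).symm
    have step4 : ∫ z, (∑' y : (r^[n]) ⁻¹' {z},
        (∏ k ∈ Finset.range n, V (r^[k] y.1)) * ((fun x => f x * g x) y.1)) ∂ν
        = ∫ x, f x * g x ∂ν :=
      (S_integral hfin V ν hPF n (fun x => f x * g x) hfg).2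
    rw [step1, step2, step3, step4]
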